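/- Let A ⊆ B be a ring extension where B is an overring of A (contained in the total quotient ring K of A). Then contraction induces a bijection between the non-regular prime ideals of B and the non-regular prime ideals of A, with inverse P ↦ PK ∩ B. -/

import Mathlib

set_option synthInstance.maxHeartbeats 1000000
set_option maxHeartbeats 1000000

theorem statement17 (A : Type*) [CommRing A]
    (B : Subalgebra A (Localization (nonZeroDivisors A))) :
    (∀ Q : Ideal B, Q.IsPrime → (∀ x ∈ Q, x ∉ nonZeroDivisors B) →
      (∀ x ∈ Q.comap (algebraMap A B), x ∉ nonZeroDivisors A) ∧
      Ideal.comap B.toSubring.subtype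
        (Ideal.map (algebraMap A (Localization (nonZeroDivisors A))) (Q.comap (algebraMap A B))) = Q) ∧
    (∀ P : Ideal A, P.IsPrime → (∀ x ∈ P, x ∉ nonZeroDivisors A) →
      ∃ Q : Ideal B, Q.IsPrime ∧ (∀ x ∈ Q, x ∉ nonZeroDivisors B) ∧
        Q.comap (algebraMap A B) = P ∧
        Q = Ideal.comap B.toSubring.subtype (Ideal.map (algebraMap A (Localization (nonZeroDivisors A))) P)) := by
  classical
  set K := Localization (nonZeroDivisors A) with hKdef
  have inj : Function.Injective (algebraMap A K) := IsFractionRing.injective A K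
  have coeAlg : ∀ a : A, ((algebraMap A B a : B) : K) = algebraMap A K a := fun a => rfl
  have snzd : ∀ s : A, s ∈ nonZeroDivisors A → (algebraMap A B s) ∈ nonZeroDivisors B := by
    intro s hs
    rw [mem_nonZeroDivisors_iff_right]
    intro b hb
    have hu : IsUnit (algebraMap A K s) := IsLocalization.map_units K ⟨s, hs⟩
    have h1 : (b : K) * algebraMap A K s = 0 := by
      have := congrArg Subtype.val hb
      simpa [coeAlg] using this
    have h2 : (b : K) = 0 := by
      rw [mul_comm] at h1
      exact hu.mul_left_cancel (by rw [h1, mul_zero])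
    exact Subtype.ext h2
  constructor
  · intro Q hQ hQz
    have hPdef : ∀ a : A, a ∈ Q.comap (algebraMap A B) ↔ algebraMap A B a ∈ Q := fun a => Iff.rfl
    constructor
    · intro x hx hxn
      exact hQz _ hx (snzd x hxn)
    · have hgoal : ∀ b : ↥B,
          ((b : K) ∈ Ideal.map (algebraMap A K) (Q.comap (algebraMap A B)) ↔ b ∈ Q) := by
        intro b
        constructor
        · intro hb
          rw [IsLocalization.mem_map_algebraMap_iff (nonZeroDivisors A) K] at hb
          obtain ⟨⟨p, s⟩, hps⟩ := hb
          have hinB : b * algebraMap A B (s : A) = algebraMap A B (p : A) := by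
            apply Subtype.ext
            simpa [coeAlg] using hps
          have hmem : b * algebraMap A B (s : A) ∈ Q := by
            rw [hinB]; exact p.2
          rcases hQ.mem_or_mem hmem with h | h
          · exact h
          · exact absurd (snzd _ s.2) (hQz _ h)
        · intro hb
          rw [IsLocalization.mem_map_algebraMap_iff (nonZeroDivisors A) K]
          obtain ⟨⟨a, s⟩, hs⟩ := IsLocalization.surj (nonZeroDivisors A) ((b : K))
          have haQ : algebraMap A B a ∈ Q := by
            have : algebraMap A B a = b * algebraMap A B (s : A) := by
              apply Subtype.ext
              simpa [coeAlg] using hs.symm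
            rw [this]
            exact Ideal.mul_mem_right _ _ hb
          exact ⟨⟨⟨a, haQ⟩, s⟩, hs⟩
      ext b
      exact hgoal ⟨b.1, b.2⟩
  · intro P hP hPz
    have hd : Disjoint ((nonZeroDivisors A : Submonoid A) : Set A) (P : Set A) := by
      rw [Set.disjoint_left]
      intro a ha haP
      exact hPz a haP ha
    have hPK : (Ideal.map (algebraMap A K) P).IsPrime :=
      IsLocalization.isPrime_of_isPrime_disjoint (nonZeroDivisors A) K P hP hd
    refine ⟨Ideal.comap B.toSubring.subtype (Ideal.map (algebraMap A K) P),
      Ideal.IsPrime.comap _, ?_, ?_, rfl⟩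
    · intro x hx hxn
      rw [Ideal.mem_comap, IsLocalization.mem_map_algebraMap_iff (nonZeroDivisors A) K] at hx
      obtain ⟨⟨p, s⟩, hps0⟩ := hx
      have hps : (x : K) * algebraMap A K (s : A) = algebraMap A K (p : A) := hps0
      have hp : (p : A) ∉ nonZeroDivisors A := hPz _ p.2
      rw [mem_nonZeroDivisors_iff_right] at hp
      push_neg at hp
      obtain ⟨z, hz0, hzne⟩ := hp
      have hzx : algebraMap A B z * x = 0 := by
        apply Subtype.ext
        have hu : IsUnit (algebraMap A K (s : A)) := IsLocalization.map_units K s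
        apply hu.mul_left_cancel
        have : algebraMap A K z * ((x : K) * algebraMap A K (s : A)) = 0 := by
          rw [hps, ← map_mul, hz0, map_zero]
        calc algebraMap A K (s : A) * ((algebraMap A B z * x : B) : K)
            = algebraMap A K z * ((x : K) * algebraMap A K (s : A)) := by
              push_cast [coeAlg]; ring
          _ = 0 := this
          _ = algebraMap A K (s : A) * ((0 : B) : K) := by simp
      have := mem_nonZeroDivisors_iff_right.mp hxn _ hzx
      apply hzne
      apply inj
      have := congrArg Subtype.val this
      exact (this : algebraMap A K z = 0).trans (map_zero _).symm
    · rw [Ideal.comap_comap]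
      have hcomp : (B.toSubring.subtype).comp (algebraMap A B) = algebraMap A K := rfl
      rw [hcomp]
      exact IsLocalization.under_map_of_isPrime_disjoint (nonZeroDivisors A) K hP hd
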